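/- Let f(x) = a x^2 + b x + c with a ≥ 1 and D = b^2 - 4ac, and suppose D = a^2 i_0^2 for some integer 1 ≤ i_0 ≤ k. Then log lcm_{0 ≤ i ≤ k}{ f(n+i) } = (k + i_0 + 1)·log n + o(log n) as n → ∞; in particular log lcm_{0 ≤ i ≤ k}{f(n+i)} / log n → k + i_0 + 1. -/

import Mathlib

open Filter
open Finset

lemma gcd_prod_dvd (x : ℤ) (y : ℕ → ℤ) (s : Finset ℕ) :
    gcd x (∏ i ∈ s, y i) ∣ ∏ i ∈ s, gcd x (y i) := by
  classical
  induction s using Finset.induction with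
  | empty => simp
  | insert n s hns ih =>
    rw [Finset.prod_insert hns, Finset.prod_insert hns]
    exact (gcd_mul_dvd_mul_gcd x _ _).trans (mul_dvd_mul_left _ ih)

lemma prod_dvd_lcm_mul_gcds (x : ℕ → ℤ) (m : ℕ) :
    (∏ j ∈ range m, x j) ∣
      ((range m).lcm x) * ∏ j ∈ range m, ∏ i ∈ range j, gcd (x i) (x j) := by
  induction m with
  | zero => simp
  | succ m ih =>
    rw [Finset.prod_range_succ, Finset.prod_range_succ]
    have hlcm : (range (m+1)).lcm x = lcm (x m) ((range m).lcm x) := by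
      rw [Finset.range_add_one, Finset.lcm_insert]
    have h1 : (range m).lcm x * x m ∣
        (range (m+1)).lcm x * ∏ i ∈ range m, gcd (x i) (x m) := by
      rw [hlcm]
      have hd : x m * (range m).lcm x ∣
          lcm (x m) ((range m).lcm x) * gcd (x m) ((range m).lcm x) := by
        rw [mul_comm (GCDMonoid.lcm _ _)]
        exact (gcd_mul_lcm (x m) ((range m).lcm x)).symm.dvd
      have hg : gcd (x m) ((range m).lcm x) ∣ ∏ i ∈ range m, gcd (x i) (x m) := by
        have hL : (range m).lcm x ∣ ∏ i ∈ range m, x i :=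
          Finset.lcm_dvd fun i hi => Finset.dvd_prod_of_mem _ hi
        calc gcd (x m) ((range m).lcm x) ∣ gcd (x m) (∏ i ∈ range m, x i) :=
              gcd_dvd_gcd dvd_rfl hL
          _ ∣ ∏ i ∈ range m, gcd (x m) (x i) := gcd_prod_dvd _ _ _
          _ ∣ ∏ i ∈ range m, gcd (x i) (x m) := by
              apply dvd_of_eq; exact Finset.prod_congr rfl fun i _ => gcd_comm _ _
      calc (range m).lcm x * x m = x m * (range m).lcm x := mul_comm _ _
        _ ∣ lcm (x m) ((range m).lcm x) * gcd (x m) ((range m).lcm x) := hd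
        _ ∣ lcm (x m) ((range m).lcm x) * ∏ i ∈ range m, gcd (x i) (x m) :=
            mul_dvd_mul_left _ hg
    calc (∏ j ∈ range m, x j) * x m
        ∣ ((range m).lcm x * ∏ j ∈ range m, ∏ i ∈ range j, gcd (x i) (x j)) * x m :=
          mul_dvd_mul_right ih _
      _ = ((range m).lcm x * x m) * ∏ j ∈ range m, ∏ i ∈ range j, gcd (x i) (x j) := by
          ring
      _ ∣ ((range (m+1)).lcm x * ∏ i ∈ range m, gcd (x i) (x m)) *
            ∏ j ∈ range m, ∏ i ∈ range j, gcd (x i) (x j) := mul_dvd_mul_right h1 _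
      _ = (range (m+1)).lcm x *
            (∏ j ∈ range m, ∏ i ∈ range j, gcd (x i) (x j)) *
            ∏ i ∈ range m, gcd (x i) (x m) := by ring
      _ = (range (m+1)).lcm x *
            ((∏ j ∈ range m, ∏ i ∈ range j, gcd (x i) (x j)) *
              ∏ i ∈ range m, gcd (x i) (x m)) := by ring


lemma aux_gcd_nonneg (x y : ℤ) : 0 ≤ gcd x y := by
  rw [← _root_.normalize_gcd, ← Int.abs_eq_normalize]; exact abs_nonneg _

lemma int_core (a b c : ℤ) (ha : 1 ≤ a) (k i₀ : ℕ) (hi₀ : 1 ≤ i₀) (hi₀k : i₀ ≤ k)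
    (hD : b^2 - 4*a*c = a^2 * (i₀ : ℤ)^2) :
    ∃ C K : ℤ, 1 ≤ C ∧ 1 ≤ K ∧ ∃ N : ℕ, ∀ n : ℕ, N ≤ n →
      1 ≤ (Finset.range (k+1)).lcm (fun i : ℕ => a*((n:ℤ)+i)^2 + b*((n:ℤ)+i) + c) ∧
      (Finset.range (k+1)).lcm (fun i : ℕ => a*((n:ℤ)+i)^2 + b*((n:ℤ)+i) + c)
        ≤ C^(k+i₀+1) * (n:ℤ)^(k+i₀+1) ∧
      (n:ℤ)^(k+i₀+1)
        ≤ K * (Finset.range (k+1)).lcm (fun i : ℕ => a*((n:ℤ)+i)^2 + b*((n:ℤ)+i) + c) := by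
  have ha0 : (0:ℤ) < a := by linarith
  set m : ℕ := k + i₀ + 1 with hm
  have hm1 : (1:ℤ) ≤ (m:ℤ) := by exact_mod_cast Nat.one_le_iff_ne_zero.mpr (by omega)
  have habs : (0:ℤ) ≤ |b| := abs_nonneg b
  have hK0 : (1:ℤ) ≤ 2*a*(m:ℤ) := by nlinarith
  refine ⟨2*a + |b| + a*(i₀:ℤ) + 2*a*(m:ℤ), 4*a*(2*a*(m:ℤ))^(m*m), ?_, ?_,
    b.natAbs + i₀ * a.natAbs + 2, ?_⟩
  · have h1 : (0:ℤ) ≤ a*(i₀:ℤ) := by positivity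
    linarith
  · have h1 : (1:ℤ) ≤ (2*a*(m:ℤ))^(m*m) := by
      have := pow_le_pow_left₀ (by norm_num : (0:ℤ) ≤ 1) hK0 (m*m)
      simpa using this
    have h2 : (4*a) * 1 ≤ (4*a) * (2*a*(m:ℤ))^(m*m) :=
      mul_le_mul_of_nonneg_left h1 (by linarith)
    linarith
  intro n hn
  have hnz : (2:ℤ) ≤ (n:ℤ) := by
    have : 2 ≤ n := by omega
    exact_mod_cast this
  have hnb : |b| + a*(i₀:ℤ) + 2 ≤ (n:ℤ) := by
    have h1 : ((b.natAbs + i₀ * a.natAbs + 2 : ℕ) : ℤ) ≤ (n:ℤ) := by exact_mod_cast hn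
    push_cast at h1
    rw [abs_of_pos ha0] at h1
    linarith
  set h : ℕ → ℤ := fun j => 2*a*((n:ℤ)+j) + (b - a*(i₀:ℤ)) with hdef
  set F : ℕ → ℤ := fun i : ℕ => a*((n:ℤ)+i)^2 + b*((n:ℤ)+i) + c with hFdef
  set L : ℤ := (Finset.range (k+1)).lcm F with hLdef
  have key : ∀ i : ℕ, h i * h (i+i₀) = 4*a*(F i) := by
    intro i
    simp only [hdef, hFdef]
    push_cast
    linear_combination hD
  have hlow : ∀ j, j < m → (n:ℤ) ≤ h j := by
    intro j hj
    simp only [hdef]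
    have hj0 : (0:ℤ) ≤ (j:ℤ) := by positivity
    have hb1 : -|b| ≤ b := neg_abs_le b
    have hi0 : (0:ℤ) ≤ (i₀:ℤ) := by positivity
    nlinarith [mul_le_mul_of_nonneg_right ha (by positivity : (0:ℤ) ≤ (n:ℤ)),
      mul_nonneg (by linarith : (0:ℤ) ≤ 2*a) hj0]
  have hup : ∀ j, j < m → h j ≤ (2*a + |b| + a*(i₀:ℤ) + 2*a*(m:ℤ))*(n:ℤ) := by
    intro j hj
    simp only [hdef]
    have hjm : (j:ℤ) + 1 ≤ (m:ℤ) := by exact_mod_cast hj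
    have hb1 : b ≤ |b| := le_abs_self b
    have hn1 : (1:ℤ) ≤ (n:ℤ) := by linarith
    have hi0 : (0:ℤ) ≤ (i₀:ℤ) := by positivity
    have hj0 : (0:ℤ) ≤ (j:ℤ) := by positivity
    have f1 : 2*a*(j:ℤ) ≤ 2*a*(m:ℤ) :=
      mul_le_mul_of_nonneg_left (by linarith) (by linarith)
    have f2 : 2*a*(m:ℤ)*1 ≤ 2*a*(m:ℤ)*(n:ℤ) :=
      mul_le_mul_of_nonneg_left hn1 (by linarith)
    have f4 : (|b|) * 1 ≤ (|b|) * (n:ℤ) := mul_le_mul_of_nonneg_left hn1 habs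
    have f5 : 0 ≤ a*(i₀:ℤ) := by positivity
    have f6 : 0 ≤ a*(i₀:ℤ)*(n:ℤ) := by positivity
    nlinarith [f1, f2, f4, f5, f6]
  have hpos' : ∀ j, j < m → 0 < h j := fun j hj => lt_of_lt_of_le (by linarith) (hlow j hj)
  -- upper divisibility
  have hU : L ∣ ∏ j ∈ range m, h j := by
    apply Finset.lcm_dvd
    intro i hi
    have hik : i ≤ k := by
      have := Finset.mem_range.mp hi; omega
    have h1 : F i ∣ h i * h (i+i₀) := ⟨4*a, by rw [key i]; ring⟩
    refine h1.trans ?_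
    have hne : i ≠ i + i₀ := by omega
    rw [← Finset.prod_pair hne]
    apply Finset.prod_dvd_prod_of_subset
    intro x hx
    rw [Finset.mem_insert, Finset.mem_singleton] at hx
    rw [Finset.mem_range]
    omega
  have hPpos : 0 < ∏ j ∈ range m, h j :=
    Finset.prod_pos fun j hj => hpos' j (Finset.mem_range.mp hj)
  have hLnn : 0 ≤ L := by
    rw [hLdef, ← Finset.normalize_lcm, ← Int.abs_eq_normalize]
    exact abs_nonneg _
  have hL0 : L ≠ 0 := by
    intro h0
    rw [h0] at hU
    exact absurd (zero_dvd_iff.mp hU) (by linarith)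
  have hL1 : 1 ≤ L := lt_of_le_of_ne hLnn (Ne.symm hL0)
  have hPle : ∏ j ∈ range m, h j ≤ (2*a + |b| + a*(i₀:ℤ) + 2*a*(m:ℤ))^m * (n:ℤ)^m := by
    calc ∏ j ∈ range m, h j
        ≤ ∏ _j ∈ range m, (2*a + |b| + a*(i₀:ℤ) + 2*a*(m:ℤ))*(n:ℤ) :=
          Finset.prod_le_prod (fun j hj => (hpos' j (Finset.mem_range.mp hj)).le)
            (fun j hj => hup j (Finset.mem_range.mp hj))
      _ = ((2*a + |b| + a*(i₀:ℤ) + 2*a*(m:ℤ))*(n:ℤ))^m := by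
          rw [Finset.prod_const, Finset.card_range]
      _ = (2*a + |b| + a*(i₀:ℤ) + 2*a*(m:ℤ))^m * (n:ℤ)^m := mul_pow _ _ _
  have hLle : L ≤ (2*a + |b| + a*(i₀:ℤ) + 2*a*(m:ℤ))^m * (n:ℤ)^m :=
    le_trans (Int.le_of_dvd hPpos hU) hPle
  -- lower divisibility
  have hLo : ∀ j ∈ range m, h j ∣ 4*a*L := by
    intro j hj
    rw [Finset.mem_range] at hj
    by_cases hjk : j ≤ k
    · have h1 : h j ∣ 4*a*F j := ⟨h (j+i₀), (key j).symm⟩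
      exact h1.trans (mul_dvd_mul_left (4*a) (Finset.dvd_lcm (by rw [Finset.mem_range]; omega)))
    · have hji : (j - i₀) + i₀ = j := by omega
      have h1 : h j ∣ 4*a*F (j - i₀) := ⟨h (j - i₀), by rw [← key (j - i₀), hji]; ring⟩
      exact h1.trans (mul_dvd_mul_left (4*a) (Finset.dvd_lcm (by rw [Finset.mem_range]; omega)))
  have hlcmh : (range m).lcm h ∣ 4*a*L := Finset.lcm_dvd hLo
  have hPdvd : (∏ j ∈ range m, h j) ∣ (4*a*L) * ∏ j ∈ range m, ∏ i ∈ range j, gcd (h i) (h j) :=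
    (prod_dvd_lcm_mul_gcds h m).trans (mul_dvd_mul_right hlcmh _)
  -- gcd bounds
  have hgcd : ∀ i j : ℕ, i < j → j < m → gcd (h i) (h j) ≤ 2*a*(m:ℤ) := by
    intro i j hij hjm
    have hd : gcd (h i) (h j) ∣ h j - h i := dvd_sub (gcd_dvd_right _ _) (gcd_dvd_left _ _)
    have he : h j - h i = 2*a*((j:ℤ) - (i:ℤ)) := by simp only [hdef]; push_cast; ring
    have hij' : (i:ℤ) < (j:ℤ) := by exact_mod_cast hij
    have hne : 0 < 2*a*((j:ℤ)-(i:ℤ)) := by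
      apply mul_pos (by linarith) (by linarith)
    have h1 : gcd (h i) (h j) ≤ 2*a*((j:ℤ)-(i:ℤ)) := Int.le_of_dvd hne (he ▸ hd)
    have hjm' : (j:ℤ) ≤ (m:ℤ) := by exact_mod_cast hjm.le
    have hi0 : (0:ℤ) ≤ (i:ℤ) := by positivity
    have h2 : 2*a*((j:ℤ)-(i:ℤ)) ≤ 2*a*(m:ℤ) :=
      mul_le_mul_of_nonneg_left (by linarith) (by linarith)
    linarith
  have hgcdpos : ∀ i j : ℕ, i < j → j < m → 0 < gcd (h i) (h j) := by
    intro i j hij hjm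
    rcases (aux_gcd_nonneg (h i) (h j)).lt_or_eq with hlt | heq
    · exact hlt
    · exfalso
      have hd : gcd (h i) (h j) ∣ h j - h i := dvd_sub (gcd_dvd_right _ _) (gcd_dvd_left _ _)
      rw [← heq] at hd
      have hz := zero_dvd_iff.mp hd
      have he : h j - h i = 2*a*((j:ℤ) - (i:ℤ)) := by simp only [hdef]; push_cast; ring
      have hij' : (i:ℤ) < (j:ℤ) := by exact_mod_cast hij
      have hp : 0 < 2*a*((j:ℤ)-(i:ℤ)) := mul_pos (by linarith) (by linarith)
      linarith
  have hGle : (∏ j ∈ range m, ∏ i ∈ range j, gcd (h i) (h j)) ≤ (2*a*(m:ℤ))^(m*m) := by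
    have hsum : ∑ j ∈ range m, j ≤ m * m := by
      calc ∑ j ∈ range m, j ≤ ∑ _j ∈ range m, m :=
            Finset.sum_le_sum fun j hj => (Finset.mem_range.mp hj).le
        _ = m * m := by rw [Finset.sum_const, Finset.card_range, smul_eq_mul]
    calc (∏ j ∈ range m, ∏ i ∈ range j, gcd (h i) (h j))
        ≤ ∏ j ∈ range m, (2*a*(m:ℤ))^j := by
          apply Finset.prod_le_prod
          · intro j _
            exact Finset.prod_nonneg fun i _ => aux_gcd_nonneg _ _
          · intro j hj
            rw [Finset.mem_range] at hj
            calc ∏ i ∈ range j, gcd (h i) (h j)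
                ≤ ∏ _i ∈ range j, (2*a*(m:ℤ)) :=
                  Finset.prod_le_prod (fun i _ => aux_gcd_nonneg _ _)
                    (fun i hi => hgcd i j (Finset.mem_range.mp hi) hj)
              _ = (2*a*(m:ℤ))^j := by rw [Finset.prod_const, Finset.card_range]
      _ = (2*a*(m:ℤ))^(∑ j ∈ range m, j) := Finset.prod_pow_eq_pow_sum _ _ _
      _ ≤ (2*a*(m:ℤ))^(m*m) := pow_le_pow_right₀ hK0 hsum
  have hGpos : 0 < ∏ j ∈ range m, ∏ i ∈ range j, gcd (h i) (h j) :=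
    Finset.prod_pos fun j hj => Finset.prod_pos fun i hi =>
      hgcdpos i j (Finset.mem_range.mp hi) (Finset.mem_range.mp hj)
  have hPge : (n:ℤ)^m ≤ ∏ j ∈ range m, h j := by
    calc (n:ℤ)^m = ∏ _j ∈ range m, (n:ℤ) := by rw [Finset.prod_const, Finset.card_range]
      _ ≤ ∏ j ∈ range m, h j :=
        Finset.prod_le_prod (fun j _ => by positivity)
          (fun j hj => hlow j (Finset.mem_range.mp hj))
  have hfinal : (n:ℤ)^m ≤ (4*a*(2*a*(m:ℤ))^(m*m)) * L := by
    have h4aL : (0:ℤ) < 4*a*L := mul_pos (by linarith) (by linarith)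
    have h1 : (∏ j ∈ range m, h j) ≤ (4*a*L) * ∏ j ∈ range m, ∏ i ∈ range j, gcd (h i) (h j) :=
      Int.le_of_dvd (mul_pos h4aL hGpos) hPdvd
    have h2 : (4*a*L) * (∏ j ∈ range m, ∏ i ∈ range j, gcd (h i) (h j))
        ≤ (4*a*L) * (2*a*(m:ℤ))^(m*m) :=
      mul_le_mul_of_nonneg_left hGle (by linarith)
    have h3 : (4*a*L) * (2*a*(m:ℤ))^(m*m) = (4*a*(2*a*(m:ℤ))^(m*m)) * L := by ring
    linarith [hPge]
  exact ⟨hL1, hLle, hfinal⟩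

/-- Let `f(x) = ax² + bx + c` with `a ≥ 1` and `D = b² - 4ac = a²i₀²` for some
`1 ≤ i₀ ≤ k`. Then `log lcm_{0 ≤ i ≤ k}{f(n+i)} = (k + i₀ + 1) log n + o(log n)`
as `n → ∞`; in particular the ratio to `log n` tends to `k + i₀ + 1`. -/
theorem log_lcm_asymptotic (a b c : ℤ) (ha : 1 ≤ a) (k : ℕ) (hk : 1 ≤ k)
    (i₀ : ℕ) (hi₀ : 1 ≤ i₀) (hi₀k : i₀ ≤ k)
    (hD : b^2 - 4*a*c = a^2 * (i₀ : ℤ)^2) :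
    Tendsto (fun n : ℕ =>
        Real.log (((Finset.range (k+1)).lcm
          (fun i : ℕ => a*((n : ℤ)+i)^2 + b*((n : ℤ)+i) + c) : ℤ) : ℝ)
        / Real.log (n : ℝ))
      atTop (nhds ((k : ℝ) + (i₀ : ℝ) + 1)) := by
  obtain ⟨C, K, hC1, hK1, N, hbd⟩ := int_core a b c ha k i₀ hi₀ hi₀k hD
  set m : ℕ := k + i₀ + 1 with hm
  have hmc : ((m:ℕ):ℝ) = (k : ℝ) + (i₀ : ℝ) + 1 := by rw [hm]; push_cast; ring
  rw [← hmc]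
  have hKr : (1:ℝ) ≤ (K:ℝ) := by exact_mod_cast hK1
  have hCr : (1:ℝ) ≤ (C:ℝ) := by exact_mod_cast hC1
  have hlog : Tendsto (fun n : ℕ => Real.log (n:ℝ)) atTop atTop :=
    Real.tendsto_log_atTop.comp tendsto_natCast_atTop_atTop
  have hlow : Tendsto (fun n : ℕ => (m:ℝ) - Real.log (K:ℝ) / Real.log (n:ℝ)) atTop
      (nhds ((m:ℕ):ℝ)) := by
    have h0 : Tendsto (fun n : ℕ => Real.log (K:ℝ) / Real.log (n:ℝ)) atTop (nhds 0) :=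
      Tendsto.div_atTop tendsto_const_nhds hlog
    simpa using ((tendsto_const_nhds : Tendsto (fun _ : ℕ => (m:ℝ)) atTop (nhds (m:ℝ)))).sub h0
  have hupp : Tendsto (fun n : ℕ => (m:ℝ) + (m:ℝ) * Real.log (C:ℝ) / Real.log (n:ℝ)) atTop
      (nhds ((m:ℕ):ℝ)) := by
    have h0 : Tendsto (fun n : ℕ => (m:ℝ) * Real.log (C:ℝ) / Real.log (n:ℝ)) atTop (nhds 0) :=
      Tendsto.div_atTop tendsto_const_nhds hlog
    simpa using ((tendsto_const_nhds : Tendsto (fun _ : ℕ => (m:ℝ)) atTop (nhds (m:ℝ)))).add h0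
  apply tendsto_of_tendsto_of_tendsto_of_le_of_le' hlow hupp
  · filter_upwards [eventually_ge_atTop N, eventually_ge_atTop 2] with n hnN hn2
    obtain ⟨hL1, _, hLge⟩ := hbd n hnN
    set L : ℤ := (Finset.range (k+1)).lcm
      (fun i : ℕ => a*((n : ℤ)+i)^2 + b*((n : ℤ)+i) + c) with hLdef
    have hn1 : (1:ℝ) < (n:ℝ) := by exact_mod_cast hn2
    have hlogn : 0 < Real.log (n:ℝ) := Real.log_pos hn1
    have hLr1 : (1:ℝ) ≤ (L:ℝ) := by exact_mod_cast hL1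
    have h1 : ((n:ℝ))^m ≤ (K:ℝ) * (L:ℝ) := by exact_mod_cast hLge
    have h2 : (m:ℝ) * Real.log (n:ℝ) ≤ Real.log (K:ℝ) + Real.log (L:ℝ) := by
      have h3 := Real.log_le_log (pow_pos (by linarith) m) h1
      rwa [Real.log_pow, Real.log_mul (by linarith) (by linarith)] at h3
    have heq : (m:ℝ) - Real.log (K:ℝ) / Real.log (n:ℝ)
        = ((m:ℝ) * Real.log (n:ℝ) - Real.log (K:ℝ)) / Real.log (n:ℝ) := by
      field_simp
    rw [heq]
    exact (div_le_div_iff_of_pos_right hlogn).mpr (by linarith)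
  · filter_upwards [eventually_ge_atTop N, eventually_ge_atTop 2] with n hnN hn2
    obtain ⟨hL1, hLle, _⟩ := hbd n hnN
    set L : ℤ := (Finset.range (k+1)).lcm
      (fun i : ℕ => a*((n : ℤ)+i)^2 + b*((n : ℤ)+i) + c) with hLdef
    have hn1 : (1:ℝ) < (n:ℝ) := by exact_mod_cast hn2
    have hlogn : 0 < Real.log (n:ℝ) := Real.log_pos hn1
    have hLr1 : (1:ℝ) ≤ (L:ℝ) := by exact_mod_cast hL1
    have h1 : (L:ℝ) ≤ (C:ℝ)^m * ((n:ℝ))^m := by exact_mod_cast hLle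
    have h2 : Real.log (L:ℝ) ≤ (m:ℝ) * Real.log (C:ℝ) + (m:ℝ) * Real.log (n:ℝ) := by
      have h3 := Real.log_le_log (by linarith) h1
      rwa [Real.log_mul (by positivity) (by positivity), Real.log_pow, Real.log_pow] at h3
    have heq : (m:ℝ) + (m:ℝ) * Real.log (C:ℝ) / Real.log (n:ℝ)
        = ((m:ℝ) * Real.log (n:ℝ) + (m:ℝ) * Real.log (C:ℝ)) / Real.log (n:ℝ) := by
      field_simp
    rw [heq]
    exact (div_le_div_iff_of_pos_right hlogn).mpr (by linarith)
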